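/- For every real x, the function F(x) = ∫_{−∞}^{x/2} ∫_{t_2}^{x−t_2} e^{−e^{−t_2}} e^{−t_2} e^{−t_1} dt_1 dt_2 is differentiable and its derivative equals ρ(x) = −e^{−x} · ∫_{−∞}^{−e^{−x/2}} (e^t/t) dt = −e^{−x}·Ei(−e^{−x/2}), where Ei(y) = ∫_{−∞}^{y} (e^t/t) dt is the exponential integral. -/

import Mathlib

open MeasureTheory Filter Real Topology

noncomputable section

/-- The Bernoulli measure on `Bool` with parameter `p` (clamped into `[0,1]`;
for `p ∈ [0,1]` this is the usual Bernoulli(`p`) distribution). -/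
def bernoulliMeasure (p : ℝ) : Measure Bool :=
  (PMF.bernoulli (min 1 (Real.toNNReal p)) (min_le_left _ _)).toMeasure

/-- The binomial random graph `G(n,p)`: a sample point assigns a Boolean (edge/non-edge)
to each unordered pair of vertices, independently with probability `p` each. -/
def gnp (n : ℕ) (p : ℝ) : Measure (Sym2 (Fin n) → Bool) :=
  Measure.pi fun _ => bernoulliMeasure p

instance (p : ℝ) : IsProbabilityMeasure (bernoulliMeasure p) := by
  unfold bernoulliMeasure; infer_instance

instance (n : ℕ) (p : ℝ) : IsProbabilityMeasure (gnp n p) := by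
  unfold gnp; infer_instance

/-- Adjacency of two vertices in a sample of `G(n,p)`. -/
def Adj {n : ℕ} (ω : Sym2 (Fin n) → Bool) (u v : Fin n) : Prop :=
  u ≠ v ∧ ω s(u, v) = true

/-- `cdeg ω U` : the number of common neighbours of the vertex set `U`. -/
def cdeg {n : ℕ} (ω : Sym2 (Fin n) → Bool) (U : Finset (Fin n)) : ℕ :=
  Nat.card {w : Fin n // ∀ u ∈ U, Adj ω w u}

/-- The maximum number of common neighbours of a `k`-element vertex set. -/
def maxCdeg (n k : ℕ) (ω : Sym2 (Fin n) → Bool) : ℕ :=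
  (Finset.powersetCard k (Finset.univ : Finset (Fin n))).sup (cdeg ω)

/-- The `j`-th largest (counted with multiplicity, `j ≥ 1`) number of common neighbours
of a `k`-element vertex set. -/
def jthMaxCdeg (n k j : ℕ) (ω : Sym2 (Fin n) → Bool) : ℕ :=
  (((Finset.powersetCard k (Finset.univ : Finset (Fin n))).val.map
      (cdeg ω)).sort (· ≤ ·)).reverse.getD (j - 1) 0

/-- The scaling constant `a_{n,k}`. -/
def ank (p : ℝ) (n k : ℕ) : ℝ :=
  n * p ^ k + Real.sqrt (2 * k * p ^ k * (1 - p ^ k) * n * Real.log n) *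
    (1 - Real.log (Nat.factorial k) / (2 * k * Real.log n)
       - Real.log (4 * Real.pi * k * Real.log n) / (4 * k * Real.log n))

/-- The scaling constant `b_{n,k}`. -/
def bnk (p : ℝ) (n k : ℕ) : ℝ :=
  Real.sqrt (p ^ k * (1 - p ^ k) * n / (2 * k * Real.log n))

/-- The density `p_i(x_1,…,x_m) = e^{-x_1}⋯e^{-x_m} e^{-e^{-x_m}} 𝟙(x_1 ≥ … ≥ x_m)`. -/
def gumbelVecDensity (m : ℕ) (x : Fin m → ℝ) : ℝ :=
  if h : 0 < m then
    (∏ j, Real.exp (-(x j))) *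
      Real.exp (-Real.exp (-(x ⟨m - 1, Nat.sub_lt h one_pos⟩))) *
      (if ∀ j l : Fin m, j ≤ l → x l ≤ x j then 1 else 0)
  else 0

end

/-- The exponential integral $\mathrm{Ei}(y)=\int_{-\infty}^y e^t/t\,dt$. -/
noncomputable def Ei (y : ℝ) : ℝ := ∫ t in Set.Iic y, Real.exp t / t

/-- The cdf $F(x)=\int_{-\infty}^{x/2}\int_{t_2}^{x-t_2}
e^{-e^{-t_2}}e^{-t_2}e^{-t_1}\,dt_1\,dt_2$. -/
noncomputable def limitCdfPath (x : ℝ) : ℝ :=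
  ∫ t2 in Set.Iic (x / 2),
    Real.exp (-Real.exp (-t2)) * Real.exp (-t2) * (∫ t1 in t2..(x - t2), Real.exp (-t1))

namespace LimitCdfAux

open Set intervalIntegral


/-- FTC for integrals over `Iic`. -/
lemma hasDerivAt_integral_Iic {f : ℝ → ℝ} {b c : ℝ} (hcb : c < b)
    (hint : IntegrableOn f (Set.Iic b)) (hcont : ContinuousOn f (Set.Iic b)) :
    HasDerivAt (fun x => ∫ t in Set.Iic x, f t) (f c) c := by
  have hmem : Set.Iic b ∈ 𝓝 c := Iic_mem_nhds hcb
  have hca : ContinuousAt f c := hcont.continuousAt hmem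
  have h1 : IntegrableOn f (Set.Iic (c - 1)) :=
    hint.mono_set (Iic_subset_Iic.2 (by linarith))
  have hii : IntervalIntegrable f volume (c - 1) c := by
    apply (hint.mono_set ?_).intervalIntegrable
    intro t ht
    have : t ≤ max (c - 1) c := ht.2
    have hm : max (c - 1) c ≤ b := by
      apply max_le <;> linarith
    exact le_trans this hm
  have hmeas : StronglyMeasurableAtFilter f (𝓝 c) :=
    ⟨Set.Iic b, hmem, hcont.aestronglyMeasurable measurableSet_Iic⟩
  have hd : HasDerivAt (fun x => (∫ t in Set.Iic (c - 1), f t) + ∫ t in (c - 1)..x, f t)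
      (f c) c :=
    (intervalIntegral.integral_hasDerivAt_right hii hmeas hca).const_add _
  apply hd.congr_of_eventuallyEq
  filter_upwards [hmem] with y hy
  have h2 : IntegrableOn f (Set.Iic y) := hint.mono_set (Iic_subset_Iic.2 hy)
  rw [← intervalIntegral.integral_Iic_sub_Iic h1 h2]
  ring

lemma f2_le (t : ℝ) : Real.exp (-Real.exp (-t)) ≤ Real.exp t := by
  apply Real.exp_le_exp.2
  have := Real.add_one_le_exp (-t)
  linarith

lemma f2_nonneg (t : ℝ) : 0 ≤ Real.exp (-Real.exp (-t)) := (Real.exp_pos _).le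

lemma f1_le (t : ℝ) :
    Real.exp (-Real.exp (-t)) * Real.exp (-t) * Real.exp (-t) ≤ 6 * Real.exp t := by
  set u := Real.exp (-t) with hu
  have hu0 : 0 < u := Real.exp_pos _
  have key : u ^ 3 ≤ 6 * Real.exp u := by
    have h := Real.pow_div_factorial_le_exp (x := u) hu0.le 3
    norm_num [Nat.factorial] at h
    linarith
  have h6 : Real.exp (-u) * u ^ 3 ≤ 6 := by
    calc Real.exp (-u) * u ^ 3 ≤ Real.exp (-u) * (6 * Real.exp u) := by
          exact mul_le_mul_of_nonneg_left key (Real.exp_pos _).le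
      _ = 6 * (Real.exp (-u) * Real.exp u) := by ring
      _ = 6 := by rw [← Real.exp_add]; simp
  have hmul : u * Real.exp t = 1 := by rw [hu, ← Real.exp_add]; simp
  calc Real.exp (-u) * u * u = Real.exp (-u) * u ^ 3 * Real.exp t := by
        rw [show Real.exp (-u) * u ^ 3 * Real.exp t
            = Real.exp (-u) * u * u * (u * Real.exp t) by ring, hmul, mul_one]
    _ ≤ 6 * Real.exp t := mul_le_mul_of_nonneg_right h6 (Real.exp_pos t).le

lemma cont_f2 : Continuous fun t : ℝ => Real.exp (-Real.exp (-t)) := by fun_prop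

lemma cont_f1 : Continuous fun t : ℝ =>
    Real.exp (-Real.exp (-t)) * Real.exp (-t) * Real.exp (-t) := by fun_prop

lemma integrableOn_f2 (c : ℝ) :
    IntegrableOn (fun t => Real.exp (-Real.exp (-t))) (Set.Iic c) := by
  apply Integrable.mono' ((integrableOn_exp_Iic c).const_mul 1)
    (cont_f2.aestronglyMeasurable.restrict)
  filter_upwards with t
  rw [Real.norm_eq_abs, abs_of_nonneg (f2_nonneg t)]
  simpa using f2_le t

lemma integrableOn_f1 (c : ℝ) :
    IntegrableOn (fun t => Real.exp (-Real.exp (-t)) * Real.exp (-t) * Real.exp (-t))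
      (Set.Iic c) := by
  apply Integrable.mono' ((integrableOn_exp_Iic c).const_mul 6)
    (cont_f1.aestronglyMeasurable.restrict)
  filter_upwards with t
  rw [Real.norm_eq_abs, abs_of_nonneg (by positivity)]
  exact f1_le t

lemma integrableOn_Ei_integrand {y : ℝ} (hy : y < 0) :
    IntegrableOn (fun t => Real.exp t / t) (Set.Iic y) := by
  apply Integrable.mono' ((integrableOn_exp_Iic y).const_mul (-y)⁻¹)
  · apply ContinuousOn.aestronglyMeasurable _ measurableSet_Iic
    apply ContinuousOn.div Real.continuous_exp.continuousOn continuousOn_id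
    intro t ht
    exact ne_of_lt (lt_of_le_of_lt ht hy)
  · filter_upwards [ae_restrict_mem measurableSet_Iic] with t ht
    have hty : t ≤ y := Set.mem_Iic.mp ht
    have ht0 : t < 0 := lt_of_le_of_lt hty hy
    rw [Real.norm_eq_abs, abs_div, abs_of_pos (Real.exp_pos t), abs_of_neg ht0]
    have : Real.exp t / -t ≤ Real.exp t / -y := by
      gcongr
      all_goals linarith
    rw [inv_mul_eq_div] at *
    linarith

lemma Ei_hasDerivAt {y : ℝ} (hy : y < 0) : HasDerivAt Ei (Real.exp y / y) y := by
  have hb : y < y / 2 := by linarith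
  apply hasDerivAt_integral_Iic hb (integrableOn_Ei_integrand (by linarith))
  apply ContinuousOn.div Real.continuous_exp.continuousOn continuousOn_id
  intro t ht
  have h1 : t ≤ y / 2 := Set.mem_Iic.mp ht
  simp only [id_eq]
  exact ne_of_lt (by linarith)

lemma abs_Ei_le {y : ℝ} (hy : y ≤ -1) : |Ei y| ≤ Real.exp y := by
  have hy0 : y < 0 := by linarith
  have h1 : |Ei y| ≤ ∫ t in Set.Iic y, ‖Real.exp t / t‖ := by
    rw [show |Ei y| = ‖Ei y‖ from rfl]
    exact MeasureTheory.norm_integral_le_integral_norm (μ := volume.restrict (Set.Iic y))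
      (f := fun t => Real.exp t / t)
  have h2 : (∫ t in Set.Iic y, ‖Real.exp t / t‖) ≤ ∫ t in Set.Iic y, Real.exp t := by
    apply setIntegral_mono_on (integrableOn_Ei_integrand hy0).norm (integrableOn_exp_Iic y)
      measurableSet_Iic
    intro t ht
    have ht1 : t ≤ -1 := le_trans (Set.mem_Iic.mp ht) hy
    rw [Real.norm_eq_abs, abs_div, abs_of_pos (Real.exp_pos t),
      abs_of_neg (by linarith : t < 0)]
    rw [div_le_iff₀ (by linarith)]
    nlinarith [Real.exp_pos t]
  rw [← integral_exp_Iic y]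
  linarith

lemma tendsto_Ei_atBot : Tendsto Ei atBot (𝓝 0) := by
  apply squeeze_zero_norm' (a := Real.exp)
  · filter_upwards [eventually_le_atBot (-1 : ℝ)] with y hy
    simpa [Real.norm_eq_abs] using abs_Ei_le hy
  · exact Real.tendsto_exp_atBot

lemma abs_intf2_le (c : ℝ) :
    |∫ t in Set.Iic c, Real.exp (-Real.exp (-t))| ≤ Real.exp c := by
  have h0 : 0 ≤ ∫ t in Set.Iic c, Real.exp (-Real.exp (-t)) :=
    setIntegral_nonneg measurableSet_Iic fun t _ => f2_nonneg t
  rw [abs_of_nonneg h0, ← integral_exp_Iic c]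
  exact setIntegral_mono_on (integrableOn_f2 c) (integrableOn_exp_Iic c)
    measurableSet_Iic fun t _ => f2_le t

/-- The key closed form: `∫_{-∞}^c e^{-e^{-t}} dt = -Ei(-e^{-c})`. -/
lemma intf2_eq (c : ℝ) :
    (∫ t in Set.Iic c, Real.exp (-Real.exp (-t))) = -Ei (-Real.exp (-c)) := by
  set H : ℝ → ℝ := fun c => Ei (-Real.exp (-c)) + ∫ t in Set.Iic c, Real.exp (-Real.exp (-t))
    with hH
  have hderiv : ∀ z : ℝ, HasDerivAt H 0 z := by
    intro z
    have hlt : -Real.exp (-z) < 0 := neg_lt_zero.2 (Real.exp_pos _)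
    have hinner : HasDerivAt (fun c : ℝ => -Real.exp (-c)) (Real.exp (-z)) z := by
      have h1 : HasDerivAt (fun c : ℝ => -c) (-1) z := (hasDerivAt_id z).neg
      have h2 := (Real.hasDerivAt_exp (-z)).comp z h1
      exact h2.neg.congr_deriv (by ring)
    have hE := (Ei_hasDerivAt hlt).comp z hinner
    have hB : HasDerivAt (fun c : ℝ => ∫ t in Set.Iic c, Real.exp (-Real.exp (-t)))
        (Real.exp (-Real.exp (-z))) z :=
      hasDerivAt_integral_Iic (lt_add_one z) (integrableOn_f2 _) cont_f2.continuousOn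
    have hsum := hE.add hB
    refine hsum.congr_deriv ?_
    have hne : Real.exp (-z) ≠ 0 := (Real.exp_pos _).ne'
    field_simp
    ring
  have hconst : ∀ z : ℝ, H z = H c := by
    intro z
    exact is_const_of_deriv_eq_zero (fun w => (hderiv w).differentiableAt)
      (fun w => (hderiv w).deriv) z c
  have hlim : Tendsto H atBot (𝓝 0) := by
    have h1 : Tendsto (fun c : ℝ => Ei (-Real.exp (-c))) atBot (𝓝 0) := by
      apply tendsto_Ei_atBot.comp
      have : Tendsto (fun c : ℝ => Real.exp (-c)) atBot atTop :=
        Real.tendsto_exp_atTop.comp tendsto_neg_atBot_atTop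
      exact tendsto_neg_atTop_atBot.comp this
    have h2 : Tendsto (fun c : ℝ => ∫ t in Set.Iic c, Real.exp (-Real.exp (-t)))
        atBot (𝓝 0) := by
      apply squeeze_zero_norm' (a := Real.exp)
      · filter_upwards with c
        simpa [Real.norm_eq_abs] using abs_intf2_le c
      · exact Real.tendsto_exp_atBot
    simpa using h1.add h2
  have hlim2 : Tendsto H atBot (𝓝 (H c)) := by
    have : H = fun _ => H c := funext hconst
    rw [this]
    exact tendsto_const_nhds
  have : H c = 0 := tendsto_nhds_unique hlim2 hlim
  rw [hH] at this
  simp only at this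
  linarith

end LimitCdfAux

/-- **The limit cdf of the path/bijective-2-clique extension has density
$\rho(x)=-e^{-x}\mathrm{Ei}(-e^{-x/2})$.** -/
theorem limitCdfPath_hasDerivAt (x : ℝ) :
    HasDerivAt limitCdfPath (-(Real.exp (-x)) * Ei (-Real.exp (-x / 2))) x := by
  have hdiv : -x / 2 = -(x / 2) := by ring
  rw [hdiv]
  -- Step 1: closed form for limitCdfPath
  have hfun : limitCdfPath = fun y =>
      (∫ t in Set.Iic (y / 2),
          Real.exp (-Real.exp (-t)) * Real.exp (-t) * Real.exp (-t))
        + Real.exp (-y) * Ei (-Real.exp (-(y / 2))) := by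
    funext y
    unfold limitCdfPath
    have hinner : ∀ t : ℝ, (∫ t1 in t..(y - t), Real.exp (-t1))
        = Real.exp (-t) - Real.exp (-(y - t)) := by
      intro t
      rw [intervalIntegral.integral_comp_neg (fun s => Real.exp s), _root_.integral_exp]
    have heq : ∀ t : ℝ,
        Real.exp (-Real.exp (-t)) * Real.exp (-t) * (∫ t1 in t..(y - t), Real.exp (-t1))
        = Real.exp (-Real.exp (-t)) * Real.exp (-t) * Real.exp (-t)
          - Real.exp (-y) * Real.exp (-Real.exp (-t)) := by
      intro t
      rw [hinner t]
      have h2 : Real.exp (-t) * Real.exp (-(y - t)) = Real.exp (-y) := by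
        rw [← Real.exp_add]; ring_nf
      linear_combination (-Real.exp (-Real.exp (-t))) * h2
    calc (∫ t in Set.Iic (y / 2),
            Real.exp (-Real.exp (-t)) * Real.exp (-t)
              * (∫ t1 in t..(y - t), Real.exp (-t1)))
        = ∫ t in Set.Iic (y / 2),
            (Real.exp (-Real.exp (-t)) * Real.exp (-t) * Real.exp (-t)
              - Real.exp (-y) * Real.exp (-Real.exp (-t))) := by
          congr 1
          funext t
          exact heq t
      _ = (∫ t in Set.Iic (y / 2),
            Real.exp (-Real.exp (-t)) * Real.exp (-t) * Real.exp (-t))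
          - ∫ t in Set.Iic (y / 2), Real.exp (-y) * Real.exp (-Real.exp (-t)) := by
          exact MeasureTheory.integral_sub (LimitCdfAux.integrableOn_f1 _)
            ((LimitCdfAux.integrableOn_f2 _).const_mul _)
      _ = (∫ t in Set.Iic (y / 2),
            Real.exp (-Real.exp (-t)) * Real.exp (-t) * Real.exp (-t))
          + Real.exp (-y) * Ei (-Real.exp (-(y / 2))) := by
          rw [MeasureTheory.integral_const_mul, LimitCdfAux.intf2_eq]
          ring
  rw [hfun]
  -- Step 2: differentiate the closed form
  have hhalf : HasDerivAt (fun y : ℝ => y / 2) (1 / 2) x := (hasDerivAt_id x).div_const 2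
  have hA : HasDerivAt (fun y : ℝ => ∫ t in Set.Iic (y / 2),
      Real.exp (-Real.exp (-t)) * Real.exp (-t) * Real.exp (-t))
      ((Real.exp (-Real.exp (-(x / 2))) * Real.exp (-(x / 2)) * Real.exp (-(x / 2)))
        * (1 / 2)) x := by
    exact (LimitCdfAux.hasDerivAt_integral_Iic (lt_add_one (x / 2))
      (LimitCdfAux.integrableOn_f1 _) LimitCdfAux.cont_f1.continuousOn).comp x hhalf
  have hs : (0 : ℝ) < Real.exp (-(x / 2)) := Real.exp_pos _
  have hinner : HasDerivAt (fun y : ℝ => -Real.exp (-(y / 2)))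
      (Real.exp (-(x / 2)) * (1 / 2)) x := by
    have h1 : HasDerivAt (fun y : ℝ => -(y / 2)) (-(1 / 2)) x := hhalf.neg
    have h2 := (Real.hasDerivAt_exp (-(x / 2))).comp x h1
    have h3 := h2.neg
    exact h3.congr_deriv (by ring)
  have hEi : HasDerivAt (fun y : ℝ => Ei (-Real.exp (-(y / 2))))
      ((Real.exp (-Real.exp (-(x / 2))) / (-Real.exp (-(x / 2))))
        * (Real.exp (-(x / 2)) * (1 / 2))) x :=
    HasDerivAt.comp (h₂ := Ei) x (LimitCdfAux.Ei_hasDerivAt (neg_lt_zero.2 hs)) hinner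
  have hexp : HasDerivAt (fun y : ℝ => Real.exp (-y)) (-Real.exp (-x)) x := by
    have h1 : HasDerivAt (fun y : ℝ => -y) (-1) x := (hasDerivAt_id x).neg
    have h2 := (Real.hasDerivAt_exp (-x)).comp x h1
    exact h2.congr_deriv (by ring)
  have htot := hA.add (hexp.mul hEi)
  refine htot.congr_deriv ?_
  symm
  have hx2 : Real.exp (-x) = Real.exp (-(x / 2)) * Real.exp (-(x / 2)) := by
    rw [← Real.exp_add]; ring_nf
  rw [hx2]
  field_simp
  ring
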